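/- arXiv:2605.19709 — 5 statements merged into one kernel-verified Lean document; each statement's English description precedes it below -/
import Mathlib

section
/- Suppose there exist C > 1, γ ∈ [0,1) and a current-mode-independent memory controller Ψ such that ‖φ(k, σ, x₀, Ψ)‖ ≤ C γ^k ‖x₀‖ for all x₀, σ, k. Then the value function V(x₀) = inf over memory controllers Ψ' of sup over σ of Σ_{k=0}^∞ ‖φ(k, σ, x₀, Ψ')‖ is absolutely homogeneous of degree one: V(λ x) = |λ| V(x) for all λ ∈ ℝ and all x ∈ ℝⁿ. -/
open Matrix Filter ENNReal

noncomputable section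

/-- State history `[x(k), …, x(0)]` of the closed loop driven by the reversed
mode list `[i_{k-1}, …, i_0]`, under a current-mode-independent memory controller `Ψ`. -/
def memHist {n m : ℕ} {S : Type*} (A : S → Matrix (Fin n) (Fin n) ℝ)
    (B : S → Matrix (Fin n) (Fin m) ℝ)
    (Ψ : List (EuclideanSpace ℝ (Fin n)) → List S → EuclideanSpace ℝ (Fin m))
    (x0 : EuclideanSpace ℝ (Fin n)) : List S → List (EuclideanSpace ℝ (Fin n))
  | [] => [x0]
  | i :: is =>
      WithLp.toLp 2 ((A i).mulVec ((memHist A B Ψ x0 is).headD 0) +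
        (B i).mulVec (Ψ (memHist A B Ψ x0 is) is)) :: memHist A B Ψ x0 is

/-- Closed-loop solution `φ(k, σ, x0, Ψ)` under the switching signal `σ`:
at each step, `Ψ` receives the current and past states `(x(k), …, x(0))`
and the past modes `(σ(k-1), …, σ(0))`. -/
def memTraj {n m : ℕ} {S : Type*} (A : S → Matrix (Fin n) (Fin n) ℝ)
    (B : S → Matrix (Fin n) (Fin m) ℝ)
    (Ψ : List (EuclideanSpace ℝ (Fin n)) → List S → EuclideanSpace ℝ (Fin m))
    (x0 : EuclideanSpace ℝ (Fin n)) (σ : ℕ → S) (k : ℕ) : EuclideanSpace ℝ (Fin n) :=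
  (memHist A B Ψ x0 (((List.range k).reverse).map σ)).headD 0

/-- The value function `V(x₀) = inf_Ψ sup_σ Σₖ ‖φ(k, σ, x₀, Ψ)‖`
(computed in `ℝ≥0∞` and converted to a real number). -/
def valFun {n m : ℕ} {S : Type*} (A : S → Matrix (Fin n) (Fin n) ℝ)
    (B : S → Matrix (Fin n) (Fin m) ℝ) (x0 : EuclideanSpace ℝ (Fin n)) : ℝ :=
  (⨅ Ψ : List (EuclideanSpace ℝ (Fin n)) → List S → EuclideanSpace ℝ (Fin m),
    ⨆ σ : ℕ → S, ∑' k : ℕ, (‖memTraj A B Ψ x0 σ k‖₊ : ℝ≥0∞)).toReal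

/-- Controller scaled by `c`. -/
def scaleC {n m : ℕ} {S : Type*} (c : ℝ)
    (Ψ : List (EuclideanSpace ℝ (Fin n)) → List S → EuclideanSpace ℝ (Fin m)) :
    List (EuclideanSpace ℝ (Fin n)) → List S → EuclideanSpace ℝ (Fin m) :=
  fun hist ms => c • Ψ (hist.map (fun v => c⁻¹ • v)) ms

lemma headD_map_smul {n : ℕ} (c : ℝ) (l : List (EuclideanSpace ℝ (Fin n))) :
    ((l.map (fun v => c • v)).headD 0) = c • (l.headD 0) := by
  cases l <;> simp

lemma mulVec_smul' {n p : ℕ} (M : Matrix (Fin n) (Fin p) ℝ) (c : ℝ)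
    (v : EuclideanSpace ℝ (Fin p)) :
    M.mulVec ((c • v : EuclideanSpace ℝ (Fin p)) : Fin p → ℝ) = c • M.mulVec v := by
  exact M.mulVec_smul c v

lemma memHist_scale {n m : ℕ} {S : Type*} (A : S → Matrix (Fin n) (Fin n) ℝ)
    (B : S → Matrix (Fin n) (Fin m) ℝ)
    (Ψ : List (EuclideanSpace ℝ (Fin n)) → List S → EuclideanSpace ℝ (Fin m))
    (c : ℝ) (hc : c ≠ 0) (x0 : EuclideanSpace ℝ (Fin n)) (is : List S) :
    memHist A B (scaleC c Ψ) (c • x0) is = (memHist A B Ψ x0 is).map (fun v => c • v) := by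
  induction is with
  | nil => simp [memHist]
  | cons i is ih =>
      have hΨ : scaleC c Ψ ((memHist A B Ψ x0 is).map (fun v => c • v)) is
          = c • Ψ (memHist A B Ψ x0 is) is := by
        rw [scaleC]
        congr 1
        rw [List.map_map]
        have : ((fun v : EuclideanSpace ℝ (Fin n) => c⁻¹ • v) ∘ fun v => c • v) = id := by
          funext v; simp [inv_smul_smul₀ hc]
        rw [this, List.map_id]
      simp only [memHist, ih, hΨ, headD_map_smul, List.map_cons]
      congr 1
      rw [mulVec_smul' (A i) c, mulVec_smul' (B i) c, ← smul_add, WithLp.toLp_smul]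

lemma memTraj_scale {n m : ℕ} {S : Type*} (A : S → Matrix (Fin n) (Fin n) ℝ)
    (B : S → Matrix (Fin n) (Fin m) ℝ)
    (Ψ : List (EuclideanSpace ℝ (Fin n)) → List S → EuclideanSpace ℝ (Fin m))
    (c : ℝ) (hc : c ≠ 0) (x0 : EuclideanSpace ℝ (Fin n)) (σ : ℕ → S) (k : ℕ) :
    memTraj A B (scaleC c Ψ) (c • x0) σ k = c • memTraj A B Ψ x0 σ k := by
  rw [memTraj, memTraj, memHist_scale A B Ψ c hc, headD_map_smul]

/-- the `ℝ≥0∞`-valued cost of a controller -/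
def cost {n m : ℕ} {S : Type*} (A : S → Matrix (Fin n) (Fin n) ℝ)
    (B : S → Matrix (Fin n) (Fin m) ℝ)
    (Ψ : List (EuclideanSpace ℝ (Fin n)) → List S → EuclideanSpace ℝ (Fin m))
    (x0 : EuclideanSpace ℝ (Fin n)) : ℝ≥0∞ :=
  ⨆ σ : ℕ → S, ∑' k : ℕ, (‖memTraj A B Ψ x0 σ k‖₊ : ℝ≥0∞)

lemma cost_scale {n m : ℕ} {S : Type*} [Nonempty S] (A : S → Matrix (Fin n) (Fin n) ℝ)
    (B : S → Matrix (Fin n) (Fin m) ℝ)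
    (Ψ : List (EuclideanSpace ℝ (Fin n)) → List S → EuclideanSpace ℝ (Fin m))
    (c : ℝ) (hc : c ≠ 0) (x0 : EuclideanSpace ℝ (Fin n)) :
    cost A B (scaleC c Ψ) (c • x0) = (‖c‖₊ : ℝ≥0∞) * cost A B Ψ x0 := by
  rw [cost, cost, ENNReal.mul_iSup]
  congr 1; funext σ
  rw [← ENNReal.tsum_mul_left]
  congr 1; funext k
  rw [memTraj_scale A B Ψ c hc, nnnorm_smul, ENNReal.coe_mul]

lemma iInf_cost_scale {n m : ℕ} {S : Type*} [Nonempty S] (A : S → Matrix (Fin n) (Fin n) ℝ)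
    (B : S → Matrix (Fin n) (Fin m) ℝ) (c : ℝ) (hc : c ≠ 0) (x0 : EuclideanSpace ℝ (Fin n)) :
    (⨅ Ψ : List (EuclideanSpace ℝ (Fin n)) → List S → EuclideanSpace ℝ (Fin m),
        cost A B Ψ (c • x0))
      = (‖c‖₊ : ℝ≥0∞) * ⨅ Ψ, cost A B Ψ x0 := by
  have hle : ∀ (d : ℝ), d ≠ 0 → ∀ y : EuclideanSpace ℝ (Fin n),
      (⨅ Ψ : List (EuclideanSpace ℝ (Fin n)) → List S → EuclideanSpace ℝ (Fin m),
        cost A B Ψ (d • y)) ≤ (‖d‖₊ : ℝ≥0∞) * ⨅ Ψ, cost A B Ψ y := by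
    intro d hd y
    rw [ENNReal.mul_iInf_of_ne (by simp [hd]) ENNReal.coe_ne_top]
    refine le_iInf fun Ψ => ?_
    exact iInf_le_of_le (scaleC d Ψ) (le_of_eq (cost_scale A B Ψ d hd y))
  refine le_antisymm (hle c hc x0) ?_
  have h2 := hle c⁻¹ (inv_ne_zero hc) (c • x0)
  rw [inv_smul_smul₀ hc] at h2
  calc (‖c‖₊ : ℝ≥0∞) * ⨅ Ψ, cost A B Ψ x0
      ≤ (‖c‖₊ : ℝ≥0∞) * ((‖c⁻¹‖₊ : ℝ≥0∞) * ⨅ Ψ, cost A B Ψ (c • x0)) := by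
        exact mul_le_mul_right h2 _
    _ = ⨅ Ψ, cost A B Ψ (c • x0) := by
        rw [← mul_assoc, ← ENNReal.coe_mul, ← nnnorm_mul, mul_inv_cancel₀ hc]
        simp

/-- Under exponential stabilizability by a memory controller,
the value function is absolutely homogeneous of degree one. -/
theorem valFun_abs_homogeneous {n m : ℕ} (hn : 0 < n) (hm : 0 < m) {S : Type*} [Fintype S] [Nonempty S]
    (A : S → Matrix (Fin n) (Fin n) ℝ) (B : S → Matrix (Fin n) (Fin m) ℝ)
    (C γ : ℝ) (hC : 1 < C) (hγ : γ ∈ Set.Ico (0 : ℝ) 1)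
    (Ψ : List (EuclideanSpace ℝ (Fin n)) → List S → EuclideanSpace ℝ (Fin m))
    (hΨ : ∀ (x0 : EuclideanSpace ℝ (Fin n)) (σ : ℕ → S) (k : ℕ),
      ‖memTraj A B Ψ x0 σ k‖ ≤ C * γ ^ k * ‖x0‖) :
    ∀ (lam : ℝ) (x : EuclideanSpace ℝ (Fin n)),
      valFun A B (lam • x) = |lam| * valFun A B x := by
  intro lam x
  rcases eq_or_ne lam 0 with h0 | h0
  · subst h0
    simp only [zero_smul, abs_zero, zero_mul]
    have hzero : ∀ (σ : ℕ → S) (k : ℕ), memTraj A B Ψ (0 : EuclideanSpace ℝ (Fin n)) σ k = 0 := by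
      intro σ k
      have := hΨ 0 σ k
      rw [norm_zero, mul_zero] at this
      exact norm_le_zero_iff.mp this
    have hc : cost A B Ψ (0 : EuclideanSpace ℝ (Fin n)) = 0 := by
      rw [cost]
      simp [hzero]
    have : (⨅ Ψ' : List (EuclideanSpace ℝ (Fin n)) → List S → EuclideanSpace ℝ (Fin m),
        cost A B Ψ' (0 : EuclideanSpace ℝ (Fin n))) = 0 :=
      le_antisymm (hc ▸ iInf_le _ Ψ) zero_le
    rw [valFun]
    rw [show (⨅ Ψ' : List (EuclideanSpace ℝ (Fin n)) → List S → EuclideanSpace ℝ (Fin m),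
        ⨆ σ : ℕ → S, ∑' k : ℕ, (‖memTraj A B Ψ' (0 : EuclideanSpace ℝ (Fin n)) σ k‖₊ : ℝ≥0∞)) =
        ⨅ Ψ', cost A B Ψ' (0 : EuclideanSpace ℝ (Fin n)) from rfl, this]
    simp
  · rw [valFun, valFun]
    rw [show (⨅ Ψ' : List (EuclideanSpace ℝ (Fin n)) → List S → EuclideanSpace ℝ (Fin m),
        ⨆ σ : ℕ → S, ∑' k : ℕ, (‖memTraj A B Ψ' (lam • x) σ k‖₊ : ℝ≥0∞)) =
        ⨅ Ψ', cost A B Ψ' (lam • x) from rfl]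
    rw [show (⨅ Ψ' : List (EuclideanSpace ℝ (Fin n)) → List S → EuclideanSpace ℝ (Fin m),
        ⨆ σ : ℕ → S, ∑' k : ℕ, (‖memTraj A B Ψ' x σ k‖₊ : ℝ≥0∞)) =
        ⨅ Ψ', cost A B Ψ' x from rfl]
    rw [iInf_cost_scale A B lam h0 x, ENNReal.toReal_mul]
    simp [Real.norm_eq_abs]
end
end

section
/- Let z₁, z₂ ∈ ℝⁿ and let Ψ₁, Ψ₂ be current-mode-independent memory controllers. Define the memory controller Ψ by Ψ(y_k, …, y_0; i_{k−1}, …, i_0) = Ψ₁(φ(k, ī, z₁, Ψ₁), …, z₁; i_{k−1}, …, i_0) + Ψ₂(φ(k, ī, z₂, Ψ₂), …, z₂; i_{k−1}, …, i_0), where the closed-loop trajectories from z₁ and z₂ are computed along the switching history (i_0, …, i_{k−1}). Then for every switching signal σ : ℕ → Σ and every k ∈ ℕ, φ(k, σ, z₁ + z₂, Ψ) = φ(k, σ, z₁, Ψ₁) + φ(k, σ, z₂, Ψ₂). -/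
open Matrix Filter ENNReal

noncomputable section

/-- The superposition controller reproduces the sum of the two
closed-loop trajectories: `φ(k, σ, z₁+z₂, Ψ) = φ(k, σ, z₁, Ψ₁) + φ(k, σ, z₂, Ψ₂)`. -/
theorem memTraj_add {n m : ℕ} (hn : 0 < n) (hm : 0 < m) {S : Type*} [Fintype S] [Nonempty S]
    (A : S → Matrix (Fin n) (Fin n) ℝ) (B : S → Matrix (Fin n) (Fin m) ℝ)
    (z1 z2 : EuclideanSpace ℝ (Fin n))
    (Ψ1 Ψ2 Ψ : List (EuclideanSpace ℝ (Fin n)) → List S → EuclideanSpace ℝ (Fin m))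
    (hΨ : ∀ (ys : List (EuclideanSpace ℝ (Fin n))) (is : List S),
      Ψ ys is = Ψ1 (memHist A B Ψ1 z1 is) is + Ψ2 (memHist A B Ψ2 z2 is) is) :
    ∀ (σ : ℕ → S) (k : ℕ),
      memTraj A B Ψ (z1 + z2) σ k = memTraj A B Ψ1 z1 σ k + memTraj A B Ψ2 z2 σ k := by
  have key : ∀ is : List S,
      (memHist A B Ψ (z1 + z2) is).headD 0 =
        (memHist A B Ψ1 z1 is).headD 0 + (memHist A B Ψ2 z2 is).headD 0 := by
    intro is
    induction is with
    | nil => rfl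
    | cons i is ih =>
        simp only [memHist, List.headD_cons, ih, hΨ]
        ext j
        simp [Matrix.mulVec, dotProduct, PiLp.add_apply, mul_add, Finset.sum_add_distrib]
        ring
  intro σ k
  exact key _
end
end

section
/- Suppose there exist C > 1, γ ∈ [0,1) and a current-mode-independent memory controller Ψ such that ‖φ(k, σ, x₀, Ψ)‖ ≤ C γ^k ‖x₀‖ for all x₀, σ, k. Then the value function V(x₀) = inf over memory controllers Ψ' of sup over σ of Σ_{k=0}^∞ ‖φ(k, σ, x₀, Ψ')‖ is subadditive: V(z₁ + z₂) ≤ V(z₁) + V(z₂) for all z₁, z₂ ∈ ℝⁿ. -/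
open Matrix Filter ENNReal

noncomputable section

/-- Under exponential stabilizability by a memory controller,
the value function is subadditive. -/
theorem valFun_subadditive {n m : ℕ} (hn : 0 < n) (hm : 0 < m) {S : Type*} [Fintype S] [Nonempty S]
    (A : S → Matrix (Fin n) (Fin n) ℝ) (B : S → Matrix (Fin n) (Fin m) ℝ)
    (C γ : ℝ) (hC : 1 < C) (hγ : γ ∈ Set.Ico (0 : ℝ) 1)
    (Ψ : List (EuclideanSpace ℝ (Fin n)) → List S → EuclideanSpace ℝ (Fin m))
    (hΨ : ∀ (x0 : EuclideanSpace ℝ (Fin n)) (σ : ℕ → S) (k : ℕ),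
      ‖memTraj A B Ψ x0 σ k‖ ≤ C * γ ^ k * ‖x0‖) :
    ∀ z1 z2 : EuclideanSpace ℝ (Fin n),
      valFun A B (z1 + z2) ≤ valFun A B z1 + valFun A B z2 := by
  intro z1 z2
  classical
  let G : (List (EuclideanSpace ℝ (Fin n)) → List S → EuclideanSpace ℝ (Fin m)) →
      EuclideanSpace ℝ (Fin n) → ℝ≥0∞ := fun Ψ' x0 =>
    ⨆ σ : ℕ → S, ∑' k : ℕ, (‖memTraj A B Ψ' x0 σ k‖₊ : ℝ≥0∞)
  let F : EuclideanSpace ℝ (Fin n) → ℝ≥0∞ := fun x0 => ⨅ Ψ', G Ψ' x0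
  have hvf : ∀ x0, valFun A B x0 = (F x0).toReal := fun _ => rfl
  have hfin : ∀ x0, F x0 ≠ ⊤ := by
    intro x0
    have h1 : F x0 ≤ G Ψ x0 := iInf_le _ Ψ
    have h2 : G Ψ x0 ≤ ENNReal.ofReal (∑' k : ℕ, C * γ ^ k * ‖x0‖) := by
      refine iSup_le fun σ => ?_
      have hsum : Summable (fun k : ℕ => C * γ ^ k * ‖x0‖) := by
        have := (summable_geometric_of_lt_one hγ.1 hγ.2).mul_left C
        exact this.mul_right ‖x0‖
      rw [ENNReal.ofReal_tsum_of_nonneg (fun k => mul_nonneg (mul_nonneg (by linarith) (pow_nonneg hγ.1 k)) (norm_nonneg _)) hsum]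
      refine ENNReal.tsum_le_tsum fun k => ?_
      rw [show (‖memTraj A B Ψ x0 σ k‖₊ : ℝ≥0∞) = ENNReal.ofReal ‖memTraj A B Ψ x0 σ k‖ from (ofReal_norm _).symm]
      exact ENNReal.ofReal_le_ofReal (hΨ x0 σ k)
    exact ne_top_of_le_ne_top ENNReal.ofReal_ne_top (h1.trans h2)
  have key : ∀ Ψ1 Ψ2, F (z1 + z2) ≤ G Ψ1 z1 + G Ψ2 z2 := by
    intro Ψ1 Ψ2
    set comb : List (EuclideanSpace ℝ (Fin n)) → List S → EuclideanSpace ℝ (Fin m) :=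
      fun _ is => Ψ1 (memHist A B Ψ1 z1 is) is + Ψ2 (memHist A B Ψ2 z2 is) is with hcomb
    have hhist : ∀ is : List S,
        (memHist A B comb (z1 + z2) is).headD 0 =
        (memHist A B Ψ1 z1 is).headD 0 + (memHist A B Ψ2 z2 is).headD 0 := by
      intro is
      induction is with
      | nil => simp [memHist]
      | cons i is ih =>
          simp only [memHist, List.headD_cons, hcomb]
          rw [ih, WithLp.ofLp_add, WithLp.ofLp_add, Matrix.mulVec_add, Matrix.mulVec_add, ← WithLp.toLp_add]
          congr 1
          abel
    have htraj : ∀ (σ : ℕ → S) (k : ℕ), memTraj A B comb (z1 + z2) σ k =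
        memTraj A B Ψ1 z1 σ k + memTraj A B Ψ2 z2 σ k := fun σ k => hhist _
    calc F (z1 + z2) ≤ G comb (z1 + z2) := iInf_le _ comb
      _ ≤ G Ψ1 z1 + G Ψ2 z2 := by
        refine iSup_le fun σ => ?_
        have hk : ∀ k, (‖memTraj A B comb (z1 + z2) σ k‖₊ : ℝ≥0∞)
            ≤ (‖memTraj A B Ψ1 z1 σ k‖₊ : ℝ≥0∞) + (‖memTraj A B Ψ2 z2 σ k‖₊ : ℝ≥0∞) := by
          intro k; rw [htraj]; exact_mod_cast nnnorm_add_le _ _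
        calc ∑' k : ℕ, (‖memTraj A B comb (z1 + z2) σ k‖₊ : ℝ≥0∞)
            ≤ ∑' k : ℕ, ((‖memTraj A B Ψ1 z1 σ k‖₊ : ℝ≥0∞) + (‖memTraj A B Ψ2 z2 σ k‖₊ : ℝ≥0∞)) :=
              ENNReal.tsum_le_tsum hk
          _ = (∑' k : ℕ, (‖memTraj A B Ψ1 z1 σ k‖₊ : ℝ≥0∞)) +
              (∑' k : ℕ, (‖memTraj A B Ψ2 z2 σ k‖₊ : ℝ≥0∞)) := ENNReal.tsum_add
          _ ≤ G Ψ1 z1 + G Ψ2 z2 := add_le_add (le_iSup (fun σ : ℕ → S => ∑' k : ℕ, (‖memTraj A B Ψ1 z1 σ k‖₊ : ℝ≥0∞)) σ) (le_iSup (fun σ : ℕ → S => ∑' k : ℕ, (‖memTraj A B Ψ2 z2 σ k‖₊ : ℝ≥0∞)) σ)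
  have hmain : F (z1 + z2) ≤ F z1 + F z2 := by
    have : F z1 + F z2 = ⨅ Ψ1, ⨅ Ψ2, (G Ψ1 z1 + G Ψ2 z2) := by
      rw [show F z1 = ⨅ Ψ1, G Ψ1 z1 from rfl, ENNReal.iInf_add]
      refine iInf_congr fun Ψ1 => ?_
      rw [show F z2 = ⨅ Ψ2, G Ψ2 z2 from rfl, ENNReal.add_iInf]
    rw [this]
    exact le_iInf fun Ψ1 => le_iInf fun Ψ2 => key Ψ1 Ψ2
  rw [hvf, hvf, hvf, ← ENNReal.toReal_add (hfin z1) (hfin z2)]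
  exact ENNReal.toReal_mono (ENNReal.add_ne_top.mpr ⟨hfin z1, hfin z2⟩) hmain
end
end

section
/- Suppose there exist C > 1, γ ∈ [0,1) and a current-mode-independent memory controller Ψ such that ‖φ(k, σ, x₀, Ψ)‖ ≤ C γ^k ‖x₀‖ for all x₀, σ, k. Then the value function V satisfies the dynamic programming (Bellman) equation V(x) = ‖x‖ + min_{u ∈ ℝ^m} max_{i ∈ Σ} V(A_i x + B_i u) for all x ∈ ℝⁿ, where the minimum over u ∈ ℝ^m is attained. -/
open Matrix Filter ENNReal

noncomputable section

namespace BellmanAux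

variable {n m : ℕ} {S : Type*}

abbrev E (n : ℕ) := EuclideanSpace ℝ (Fin n)
abbrev Ctrl (n m : ℕ) (S : Type*) := List (E n) → List S → E m

variable (A : S → Matrix (Fin n) (Fin n) ℝ) (B : S → Matrix (Fin n) (Fin m) ℝ)

def shiftC (Ψ : Ctrl n m S) (x : E n) (i : S) : Ctrl n m S :=
  fun h ms => Ψ (h ++ [x]) (ms ++ [i])

def stepX (Ψ : Ctrl n m S) (x : E n) (i : S) : E n :=
  WithLp.toLp 2 ((A i).mulVec x + (B i).mulVec (Ψ [x] []))

lemma memHist_ne_nil (Ψ : Ctrl n m S) (x : E n) (l : List S) : memHist A B Ψ x l ≠ [] := by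
  cases l <;> simp [memHist]

lemma headD_append {α : Type*} [Zero α] (L : List α) (x : α) (h : L ≠ []) :
    ((L ++ [x]).headD 0) = L.headD 0 := by cases L with
  | nil => exact absurd rfl h
  | cons a t => simp

lemma memHist_append (Ψ : Ctrl n m S) (x : E n) (i : S) (l : List S) :
    memHist A B Ψ x (l ++ [i]) =
      memHist A B (shiftC Ψ x i) (stepX A B Ψ x i) l ++ [x] := by
  induction l with
  | nil => simp [memHist, stepX]
  | cons j t ih =>
      simp only [List.cons_append, memHist, List.append_eq, ih]
      rw [headD_append _ _ (memHist_ne_nil A B _ _ _)]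
      rfl

lemma memTraj_zero (Ψ : Ctrl n m S) (x : E n) (σ : ℕ → S) :
    memTraj A B Ψ x σ 0 = x := by simp [memTraj, memHist]

lemma memTraj_succ (Ψ : Ctrl n m S) (x : E n) (σ : ℕ → S) (k : ℕ) :
    memTraj A B Ψ x σ (k + 1) =
      memTraj A B (shiftC Ψ x (σ 0)) (stepX A B Ψ x (σ 0)) (fun j => σ (j + 1)) k := by
  have hl : ((List.range (k+1)).reverse).map σ =
      (((List.range k).reverse).map (fun j => σ (j + 1))) ++ [σ 0] := by
    simp [List.range_succ_eq_map, List.map_reverse, List.map_map, Function.comp_def]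
  rw [memTraj, hl, memHist_append, headD_append _ _ (memHist_ne_nil A B _ _ _)]
  rfl

end BellmanAux

namespace BellmanAux
variable {n m : ℕ} {S : Type*}
variable (A : S → Matrix (Fin n) (Fin n) ℝ) (B : S → Matrix (Fin n) (Fin m) ℝ)

def cost (Ψ : Ctrl n m S) (x : E n) (σ : ℕ → S) : ℝ≥0∞ :=
  ∑' k, (‖memTraj A B Ψ x σ k‖₊ : ℝ≥0∞)

def Wfun (x : E n) : ℝ≥0∞ := ⨅ Ψ : Ctrl n m S, ⨆ σ : ℕ → S, cost A B Ψ x σ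

lemma cost_succ (Ψ : Ctrl n m S) (x : E n) (σ : ℕ → S) :
    cost A B Ψ x σ = (‖x‖₊ : ℝ≥0∞) +
      cost A B (shiftC Ψ x (σ 0)) (stepX A B Ψ x (σ 0)) (fun j => σ (j + 1)) := by
  rw [cost, tsum_eq_zero_add' ENNReal.summable, memTraj_zero]
  congr 1
  simp only [cost, memTraj_succ]

def combC (Ψ1 Ψ2 : Ctrl n m S) (z : E n) : Ctrl n m S :=
  fun h ms => Ψ1 (List.zipWith (· - ·) h (memHist A B Ψ2 z ms)) ms +
    Ψ2 (memHist A B Ψ2 z ms) ms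

lemma memHist_length (Ψ : Ctrl n m S) (x : E n) (l : List S) :
    (memHist A B Ψ x l).length = l.length + 1 := by
  induction l with
  | nil => simp [memHist]
  | cons i t ih => simp [memHist, ih]

lemma zipWith_sub_zipWith_add (L M : List (E n)) (h : L.length = M.length) :
    List.zipWith (· - ·) (List.zipWith (· + ·) L M) M = L := by
  induction L generalizing M with
  | nil => simp
  | cons a t ih => cases M with
    | nil => simp at h
    | cons b s => simp_all

lemma headD_zipWith_add (L M : List (E n)) (hL : L ≠ []) (hM : M ≠ []) :
    (List.zipWith (· + ·) L M).headD 0 = L.headD 0 + M.headD 0 := by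
  cases L with
  | nil => exact absurd rfl hL
  | cons a t => cases M with
    | nil => exact absurd rfl hM
    | cons b s => simp

lemma memHist_comb (Ψ1 Ψ2 : Ctrl n m S) (y z : E n) (l : List S) :
    memHist A B (combC A B Ψ1 Ψ2 z) (y + z) l =
      List.zipWith (· + ·) (memHist A B Ψ1 y l) (memHist A B Ψ2 z l) := by
  induction l with
  | nil => simp [memHist]
  | cons i t ih =>
      simp only [memHist, ih, combC]
      rw [zipWith_sub_zipWith_add _ _ (by rw [memHist_length, memHist_length]),
        headD_zipWith_add _ _ (memHist_ne_nil A B _ _ _) (memHist_ne_nil A B _ _ _),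
        WithLp.ofLp_add, WithLp.ofLp_add, Matrix.mulVec_add, Matrix.mulVec_add]
      congr 1
      beta_reduce
      rw [← WithLp.toLp_add]
      congr 1
      module

lemma memTraj_comb (Ψ1 Ψ2 : Ctrl n m S) (y z : E n) (σ : ℕ → S) (k : ℕ) :
    memTraj A B (combC A B Ψ1 Ψ2 z) (y + z) σ k =
      memTraj A B Ψ1 y σ k + memTraj A B Ψ2 z σ k := by
  rw [memTraj, memTraj, memTraj, memHist_comb,
    headD_zipWith_add _ _ (memHist_ne_nil A B _ _ _) (memHist_ne_nil A B _ _ _)]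

end BellmanAux

namespace BellmanAux
variable {n m : ℕ} {S : Type*}
variable (A : S → Matrix (Fin n) (Fin n) ℝ) (B : S → Matrix (Fin n) (Fin m) ℝ)

section stab
variable {C γ : ℝ} {Ψs : Ctrl n m S}

lemma ofReal_norm_eq_coe_nnnorm {F : Type*} [SeminormedAddCommGroup F] (a : F) :
    ENNReal.ofReal ‖a‖ = (‖a‖₊ : ℝ≥0∞) := by
  rw [← coe_nnnorm, ENNReal.ofReal_coe_nnreal]

lemma cost_stab_le (hC : 1 < C) (hγ : γ ∈ Set.Ico (0:ℝ) 1)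
    (hΨ : ∀ (x0 : E n) (σ : ℕ → S) (k : ℕ), ‖memTraj A B Ψs x0 σ k‖ ≤ C * γ ^ k * ‖x0‖)
    (x : E n) (σ : ℕ → S) :
    cost A B Ψs x σ ≤ ENNReal.ofReal (C / (1 - γ)) * (‖x‖₊ : ℝ≥0∞) := by
  have h1γ : 0 < 1 - γ := by linarith [hγ.2]
  have hsum : Summable (fun k : ℕ => C * γ ^ k * ‖x‖) := by
    have := (summable_geometric_of_lt_one hγ.1 hγ.2).mul_left C
    exact this.mul_right ‖x‖
  calc cost A B Ψs x σ ≤ ∑' k : ℕ, ENNReal.ofReal (C * γ ^ k * ‖x‖) := by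
        refine ENNReal.tsum_le_tsum fun k => ?_
        rw [← ofReal_norm_eq_coe_nnnorm]
        exact ENNReal.ofReal_le_ofReal (hΨ x σ k)
    _ = ENNReal.ofReal (∑' k : ℕ, C * γ ^ k * ‖x‖) :=
        (ENNReal.ofReal_tsum_of_nonneg (fun k => by
          have hC0 : (0:ℝ) ≤ C := by linarith
          have := hγ.1
          positivity) hsum).symm
    _ = ENNReal.ofReal (C / (1 - γ) * ‖x‖) := by
        congr 1
        rw [tsum_mul_right, tsum_mul_left, tsum_geometric_of_lt_one hγ.1 hγ.2]
        ring
    _ = ENNReal.ofReal (C / (1 - γ)) * (‖x‖₊ : ℝ≥0∞) := by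
        rw [ENNReal.ofReal_mul (by positivity), ofReal_norm_eq_coe_nnnorm]

lemma Wfun_le (hC : 1 < C) (hγ : γ ∈ Set.Ico (0:ℝ) 1)
    (hΨ : ∀ (x0 : E n) (σ : ℕ → S) (k : ℕ), ‖memTraj A B Ψs x0 σ k‖ ≤ C * γ ^ k * ‖x0‖)
    (x : E n) :
    Wfun A B x ≤ ENNReal.ofReal (C / (1 - γ)) * (‖x‖₊ : ℝ≥0∞) :=
  iInf_le_of_le Ψs (iSup_le fun σ => cost_stab_le A B hC hγ hΨ x σ)

lemma Wfun_ne_top (hC : 1 < C) (hγ : γ ∈ Set.Ico (0:ℝ) 1)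
    (hΨ : ∀ (x0 : E n) (σ : ℕ → S) (k : ℕ), ‖memTraj A B Ψs x0 σ k‖ ≤ C * γ ^ k * ‖x0‖)
    (x : E n) : Wfun A B x ≠ ⊤ :=
  ne_top_of_le_ne_top (by finiteness) (Wfun_le A B hC hγ hΨ x)

lemma Wfun_lip (hC : 1 < C) (hγ : γ ∈ Set.Ico (0:ℝ) 1)
    (hΨ : ∀ (x0 : E n) (σ : ℕ → S) (k : ℕ), ‖memTraj A B Ψs x0 σ k‖ ≤ C * γ ^ k * ‖x0‖)
    (y z : E n) :
    Wfun A B y ≤ Wfun A B z + ENNReal.ofReal (C / (1 - γ)) * (‖y - z‖₊ : ℝ≥0∞) := by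
  have key : ∀ Ψ1 : Ctrl n m S, Wfun A B y ≤
      (⨆ σ : ℕ → S, cost A B Ψ1 z σ) + ENNReal.ofReal (C / (1 - γ)) * (‖y - z‖₊ : ℝ≥0∞) := by
    intro Ψ1
    refine le_trans (iInf_le _ (combC A B Ψ1 Ψs (y - z))) (iSup_le fun σ => ?_)
    have hstep : cost A B (combC A B Ψ1 Ψs (y - z)) (z + (y - z)) σ
        ≤ cost A B Ψ1 z σ + cost A B Ψs (y - z) σ := by
      simp only [cost]
      rw [← ENNReal.tsum_add]
      refine ENNReal.tsum_le_tsum fun k => ?_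
      rw [memTraj_comb]
      exact_mod_cast nnnorm_add_le _ _
    rw [show z + (y - z) = y by abel] at hstep
    calc cost A B (combC A B Ψ1 Ψs (y - z)) y σ
        ≤ cost A B Ψ1 z σ + cost A B Ψs (y - z) σ := hstep
      _ ≤ (⨆ σ' : ℕ → S, cost A B Ψ1 z σ') +
            ENNReal.ofReal (C / (1 - γ)) * (‖y - z‖₊ : ℝ≥0∞) :=
          add_le_add (le_iSup _ σ) (cost_stab_le A B hC hγ hΨ _ σ)
  refine le_trans (le_iInf key) ?_
  rw [← iInf_add]
  exact le_rfl

lemma Wfun_ge [Nonempty S] (x : E n) : (‖x‖₊ : ℝ≥0∞) ≤ Wfun A B x := by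
  refine le_iInf fun Ψ1 => ?_
  refine le_trans ?_ (le_iSup _ (fun _ => Classical.arbitrary S))
  refine le_trans ?_ (ENNReal.le_tsum 0)
  rw [memTraj_zero]

end stab
end BellmanAux

namespace BellmanAux
variable {n m : ℕ} {S : Type*}
variable (A : S → Matrix (Fin n) (Fin n) ℝ) (B : S → Matrix (Fin n) (Fin m) ℝ)

def nx (x : E n) (u : E m) (i : S) : E n := WithLp.toLp 2 ((A i).mulVec x + (B i).mulVec u)

section bellman
variable [Nonempty S]

lemma le_Wfun_bellman (x : E n) :
    (‖x‖₊ : ℝ≥0∞) + ⨅ u : E m, ⨆ i : S, Wfun A B (nx A B x u i) ≤ Wfun A B x := by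
  refine le_iInf fun Ψ1 => ?_
  set u' : E m := Ψ1 [x] [] with hu'
  refine le_trans (add_le_add_right (iInf_le _ u') _) ?_
  rw [add_iSup]
  refine iSup_le fun i => ?_
  refine le_trans (add_le_add_right (iInf_le _ (shiftC Ψ1 x i)) _) ?_
  rw [add_iSup]
  refine iSup_le fun σ'' => ?_
  set σ : ℕ → S := fun k => match k with | 0 => i | (j+1) => σ'' j with hσ
  refine le_trans (le_of_eq ?_) (le_iSup _ σ)
  conv_rhs => rw [cost_succ]
  rfl

lemma Wfun_le_bellman {C γ : ℝ} {Ψs : Ctrl n m S} (hC : 1 < C) (hγ : γ ∈ Set.Ico (0:ℝ) 1)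
    (hΨ : ∀ (x0 : E n) (σ : ℕ → S) (k : ℕ), ‖memTraj A B Ψs x0 σ k‖ ≤ C * γ ^ k * ‖x0‖)
    [Fintype S] (x : E n) :
    Wfun A B x ≤ (‖x‖₊ : ℝ≥0∞) + ⨅ u : E m, ⨆ i : S, Wfun A B (nx A B x u i) := by
  rw [add_iInf]
  refine le_iInf fun u => ?_
  refine ENNReal.le_of_forall_pos_le_add fun ε hε _ => ?_
  have hopt : ∀ y : E n, ∃ Ψ' : Ctrl n m S, (⨆ σ : ℕ → S, cost A B Ψ' y σ) ≤ Wfun A B y + ε := by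
    intro y
    have hlt : Wfun A B y < Wfun A B y + ε :=
      ENNReal.lt_add_right (Wfun_ne_top A B hC hγ hΨ y) (by exact_mod_cast hε.ne')
    obtain ⟨Ψ', hΨ'⟩ := iInf_lt_iff.mp hlt
    exact ⟨Ψ', hΨ'.le⟩
  set Ψopt : E n → Ctrl n m S := fun y => (hopt y).choose with hΨopt
  have hopt' : ∀ y, (⨆ σ : ℕ → S, cost A B (Ψopt y) y σ) ≤ Wfun A B y + ε :=
    fun y => (hopt y).choose_spec
  set Ψstar : Ctrl n m S := fun h ms =>
    (ms.getLast?).elim u (fun i => Ψopt (nx A B x u i) h.dropLast ms.dropLast) with hΨstar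
  have hstar0 : Ψstar [x] [] = u := rfl
  have hshift : ∀ i : S, shiftC Ψstar x i = Ψopt (nx A B x u i) := by
    intro i
    funext h ms
    simp [shiftC, hΨstar, List.getLast?_concat, List.dropLast_concat]
  have hstep : ∀ i : S, stepX A B Ψstar x i = nx A B x u i := by
    intro i
    simp [stepX, nx, hstar0]
  refine le_trans (iInf_le _ Ψstar) (iSup_le fun σ => ?_)
  rw [cost_succ, hshift, hstep]
  calc (‖x‖₊ : ℝ≥0∞) + cost A B (Ψopt (nx A B x u (σ 0))) (nx A B x u (σ 0)) (fun j => σ (j+1))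
      ≤ (‖x‖₊ : ℝ≥0∞) + (Wfun A B (nx A B x u (σ 0)) + ε) :=
        add_le_add_right (le_trans (le_iSup _ _) (hopt' _)) _
    _ ≤ (‖x‖₊ : ℝ≥0∞) + ((⨆ i : S, Wfun A B (nx A B x u i)) + ε) :=
        by gcongr; exact le_iSup (fun i => Wfun A B (nx A B x u i)) (σ 0)
    _ = (‖x‖₊ : ℝ≥0∞) + (⨆ i : S, Wfun A B (nx A B x u i)) + ε := by rw [add_assoc]

lemma Wfun_bellman {C γ : ℝ} {Ψs : Ctrl n m S} (hC : 1 < C) (hγ : γ ∈ Set.Ico (0:ℝ) 1)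
    (hΨ : ∀ (x0 : E n) (σ : ℕ → S) (k : ℕ), ‖memTraj A B Ψs x0 σ k‖ ≤ C * γ ^ k * ‖x0‖)
    [Fintype S] (x : E n) :
    Wfun A B x = (‖x‖₊ : ℝ≥0∞) + ⨅ u : E m, ⨆ i : S, Wfun A B (nx A B x u i) :=
  le_antisymm (Wfun_le_bellman A B hC hγ hΨ x) (le_Wfun_bellman A B x)

end bellman
end BellmanAux

namespace BellmanAux
variable {n m : ℕ} {S : Type*}
variable (A : S → Matrix (Fin n) (Fin n) ℝ) (B : S → Matrix (Fin n) (Fin m) ℝ)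

lemma fintype_iSup_ne_top [Fintype S] {f : S → ℝ≥0∞} (h : ∀ i, f i ≠ ⊤) : (⨆ i, f i) ≠ ⊤ :=
  ne_top_of_le_ne_top (ENNReal.sum_lt_top.mpr (fun i (_ : i ∈ Finset.univ) => (h i).lt_top)).ne
    (iSup_le fun i => Finset.single_le_sum (fun _ _ => zero_le) (Finset.mem_univ i))

lemma valFun_def (x : E n) : valFun A B x = (Wfun A B x).toReal := rfl

section real
variable [Fintype S] [Nonempty S]
variable {C γ : ℝ} {Ψs : Ctrl n m S}
variable (hC : 1 < C) (hγ : γ ∈ Set.Ico (0:ℝ) 1)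
variable (hΨ : ∀ (x0 : E n) (σ : ℕ → S) (k : ℕ), ‖memTraj A B Ψs x0 σ k‖ ≤ C * γ ^ k * ‖x0‖)
include hC hγ hΨ

lemma norm_le_valFun (x : E n) : ‖x‖ ≤ valFun A B x := by
  have h := ENNReal.toReal_mono (Wfun_ne_top A B hC hγ hΨ x) (Wfun_ge A B x)
  simpa [valFun_def] using h

lemma valFun_lip (y z : E n) :
    valFun A B y ≤ valFun A B z + (C / (1 - γ)) * ‖y - z‖ := by
  have hD0 : 0 ≤ C / (1 - γ) := by
    have h1γ : 0 < 1 - γ := by linarith [hγ.2]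
    positivity
  have h := ENNReal.toReal_mono
    (ENNReal.add_ne_top.2 ⟨Wfun_ne_top A B hC hγ hΨ z, by finiteness⟩)
    (Wfun_lip A B hC hγ hΨ y z)
  rw [ENNReal.toReal_add (Wfun_ne_top A B hC hγ hΨ z) (by finiteness),
    ENNReal.toReal_mul, ENNReal.toReal_ofReal hD0] at h
  simpa [valFun_def] using h

lemma valFun_lipschitz : LipschitzWith (C / (1 - γ)).toNNReal (valFun A B) := by
  have hD0 : 0 ≤ C / (1 - γ) := by
    have h1γ : 0 < 1 - γ := by linarith [hγ.2]
    positivity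
  refine LipschitzWith.of_dist_le_mul fun y z => ?_
  rw [Real.dist_eq, Real.coe_toNNReal _ hD0, dist_eq_norm, abs_sub_le_iff]
  constructor
  · linarith [valFun_lip A B hC hγ hΨ y z]
  · have := valFun_lip A B hC hγ hΨ z y
    rw [norm_sub_rev] at this
    linarith

lemma valFun_bellman_real (x : E n) :
    valFun A B x = ‖x‖ + ⨅ u : E m, ⨆ i : S, valFun A B (nx A B x u i) := by
  have hW : ∀ y : E n, Wfun A B y ≠ ⊤ := Wfun_ne_top A B hC hγ hΨ
  have hsup : ∀ u : E m, (⨆ i : S, Wfun A B (nx A B x u i)) ≠ ⊤ :=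
    fun u => fintype_iSup_ne_top (fun i => hW _)
  have hQ : (⨅ u : E m, ⨆ i : S, Wfun A B (nx A B x u i)) ≠ ⊤ :=
    ne_top_of_le_ne_top (hsup 0) (iInf_le _ 0)
  have h1 : ((‖x‖₊ : ℝ≥0∞)).toReal = ‖x‖ := by simp
  rw [valFun_def, Wfun_bellman A B hC hγ hΨ x, ENNReal.toReal_add (by finiteness) hQ,
    ENNReal.toReal_iInf hsup, h1]
  congr 1
  refine iInf_congr fun u => ?_
  rw [ENNReal.toReal_iSup (fun i => hW _)]
  rfl

end real
end BellmanAux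

namespace BellmanAux
variable {n m : ℕ} {S : Type*}

def TB (B : S → Matrix (Fin n) (Fin m) ℝ) : (E m) →ₗ[ℝ] (S → E n) where
  toFun u := fun i => WithLp.toLp 2 ((B i).mulVec u)
  map_add' u v := funext fun i => by ext; simp [Matrix.mulVec_add]
  map_smul' c u := funext fun i => by ext; simp [Matrix.mulVec_smul]

variable (A : S → Matrix (Fin n) (Fin n) ℝ) (B : S → Matrix (Fin n) (Fin m) ℝ)

section attain
variable [Fintype S] [Nonempty S]
variable {C γ : ℝ} {Ψs : Ctrl n m S}
variable (hC : 1 < C) (hγ : γ ∈ Set.Ico (0:ℝ) 1)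
variable (hΨ : ∀ (x0 : E n) (σ : ℕ → S) (k : ℕ), ‖memTraj A B Ψs x0 σ k‖ ≤ C * γ ^ k * ‖x0‖)
include hC hγ hΨ

lemma exists_argmin (x : E n) :
    ∃ ustar : E m, (⨆ i : S, valFun A B (nx A B x ustar i)) =
      ⨅ u : E m, ⨆ i : S, valFun A B (nx A B x u i) := by
  have hVcont : Continuous (valFun A B) := (valFun_lipschitz A B hC hγ hΨ).continuous
  set ax : S → E n := fun i => (WithLp.equiv 2 (Fin n → ℝ)).symm ((A i).mulVec x) with hax
  set G : (S → E n) → ℝ := fun w => ⨆ i : S, valFun A B (ax i + w i) with hG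
  have hGcont : Continuous G := by
    have hGeq : G = fun w => Finset.univ.sup' Finset.univ_nonempty
        (fun i => valFun A B (ax i + w i)) := by
      funext w
      exact (Finset.sup'_univ_eq_ciSup (fun i : S => valFun A B (ax i + w i))).symm
    rw [hGeq]
    exact Continuous.finset_sup'_apply Finset.univ_nonempty
      (fun i _ => hVcont.comp (continuous_const.add (continuous_apply i)))
  set M : ℝ := ⨆ i : S, ‖ax i‖ with hM
  have hbddM : BddAbove (Set.range fun i : S => ‖ax i‖) := (Set.finite_range _).bddAbove
  have hMle : ∀ i : S, ‖ax i‖ ≤ M := fun i => le_ciSup hbddM i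
  have hM0 : 0 ≤ M := le_trans (norm_nonneg _) (hMle (Classical.arbitrary S))
  have hGlb : ∀ w : S → E n, ‖w‖ - M ≤ G w := by
    intro w
    obtain ⟨i0, -, hi0⟩ := Finset.exists_mem_eq_sup Finset.univ Finset.univ_nonempty
      (fun i : S => ‖w i‖₊)
    have hnw : ‖w‖ = ‖w i0‖ := by rw [Pi.norm_def, hi0]; rfl
    have h1 : valFun A B (ax i0 + w i0) ≤ G w :=
      le_ciSup (f := fun i : S => valFun A B (ax i + w i))
        ((Set.finite_range _).bddAbove) i0
    have h2 : ‖ax i0 + w i0‖ ≤ valFun A B (ax i0 + w i0) :=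
      norm_le_valFun A B hC hγ hΨ _
    have h3 : ‖w i0‖ ≤ ‖ax i0 + w i0‖ + ‖ax i0‖ := by
      have := norm_add_le (ax i0 + w i0) (-ax i0)
      simpa using this
    have := hMle i0
    linarith [hnw]
  have hVnn : ∀ y : E n, 0 ≤ valFun A B y := fun y => ENNReal.toReal_nonneg
  have hg0 : 0 ≤ G 0 :=
    le_trans (hVnn _) (le_ciSup (f := fun i : S => valFun A B (ax i + (0 : S → E n) i))
      ((Set.finite_range _).bddAbove) (Classical.arbitrary S))
  set R : ℝ := G 0 + M + 1 with hR
  have hR0 : 0 ≤ R := by simp only [hR]; linarith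
  set Z : Set (S → E n) := (LinearMap.range (TB B) : Set (S → E n)) ∩ Metric.closedBall 0 R
    with hZ
  have hclosed : IsClosed (LinearMap.range (TB B) : Set (S → E n)) :=
    Submodule.closed_of_finiteDimensional _
  have hZcomp : IsCompact Z := (isCompact_closedBall 0 R).inter_left hclosed
  have hZne : Z.Nonempty := ⟨0, ⟨Submodule.zero_mem _, by
    simpa [Metric.mem_closedBall] using hR0⟩⟩
  obtain ⟨wst, hwstZ, hmin⟩ := hZcomp.exists_isMinOn hZne hGcont.continuousOn
  obtain ⟨ust, hust⟩ := hwstZ.1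
  have hGT : ∀ u : E m, G (TB B u) = ⨆ i : S, valFun A B (nx A B x u i) := fun u => rfl
  have claim : ∀ u : E m, (⨆ i : S, valFun A B (nx A B x ust i)) ≤
      ⨆ i : S, valFun A B (nx A B x u i) := by
    intro u
    rw [← hGT, ← hGT, hust]
    by_cases h : ‖TB B u‖ ≤ R
    · exact hmin ⟨LinearMap.mem_range_self _ u, by simpa [Metric.mem_closedBall] using h⟩
    · push_neg at h
      have h1 : G wst ≤ G 0 := hmin ⟨Submodule.zero_mem _, by
        simpa [Metric.mem_closedBall] using hR0⟩
      have h2 : ‖TB B u‖ - M ≤ G (TB B u) := hGlb _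
      have h3 : G 0 < G (TB B u) := by
        have h4 : R - M < ‖TB B u‖ - M := by linarith
        simp only [hR] at h4
        linarith
      linarith
  refine ⟨ust, le_antisymm (le_ciInf claim) (ciInf_le ?_ ust)⟩
  refine ⟨0, fun v hv => ?_⟩
  obtain ⟨u, rfl⟩ := hv
  exact le_trans (hVnn _) (le_ciSup (f := fun i : S => valFun A B (nx A B x u i))
    ((Set.finite_range _).bddAbove) (Classical.arbitrary S))

end attain
end BellmanAux

/-- Under exponential stabilizability by a memory controller,
the value function satisfies the Bellman equation
`V(x) = ‖x‖ + min_u max_i V(A_i x + B_i u)`, the minimum being attained. -/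
theorem valFun_bellman {n m : ℕ} (hn : 0 < n) (hm : 0 < m) {S : Type*} [Fintype S] [Nonempty S]
    (A : S → Matrix (Fin n) (Fin n) ℝ) (B : S → Matrix (Fin n) (Fin m) ℝ)
    (C γ : ℝ) (hC : 1 < C) (hγ : γ ∈ Set.Ico (0 : ℝ) 1)
    (Ψ : List (EuclideanSpace ℝ (Fin n)) → List S → EuclideanSpace ℝ (Fin m))
    (hΨ : ∀ (x0 : EuclideanSpace ℝ (Fin n)) (σ : ℕ → S) (k : ℕ),
      ‖memTraj A B Ψ x0 σ k‖ ≤ C * γ ^ k * ‖x0‖) :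
    ∀ x : EuclideanSpace ℝ (Fin n),
      (valFun A B x = ‖x‖ +
        ⨅ u : EuclideanSpace ℝ (Fin m),
          ⨆ i : S, valFun A B (WithLp.toLp 2 ((A i).mulVec x + (B i).mulVec u))) ∧
      ∃ ustar : EuclideanSpace ℝ (Fin m),
        (⨆ i : S, valFun A B (WithLp.toLp 2 ((A i).mulVec x + (B i).mulVec ustar))) =
        ⨅ u : EuclideanSpace ℝ (Fin m),
          ⨆ i : S, valFun A B (WithLp.toLp 2 ((A i).mulVec x + (B i).mulVec u)) := by
  intro x
  exact ⟨BellmanAux.valFun_bellman_real A B hC hγ hΨ x,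
    BellmanAux.exists_argmin A B hC hγ hΨ x⟩
end
end

section
/- Suppose there exist C > 1, γ ∈ [0,1) and a current-mode-independent memory controller Ψ such that ‖φ(k, σ, x₀, Ψ)‖ ≤ C γ^k ‖x₀‖ for all x₀, σ, k, and let V be the associated value function. Let Φ : ℝⁿ → ℝ^m be any map satisfying max_{i ∈ Σ} V(A_i x + B_i Φ(x)) = min_{u ∈ ℝ^m} max_{i ∈ Σ} V(A_i x + B_i u) for all x ∈ ℝⁿ. Then for every x ∈ ℝⁿ and every i ∈ Σ, V(A_i x + B_i Φ(x)) ≤ V(x) − ‖x‖ ≤ (1 − (1−γ)/C) V(x). -/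
open Matrix Filter ENNReal

noncomputable section

section AuxSection

variable {n m : ℕ} {S : Type*} (A : S → Matrix (Fin n) (Fin n) ℝ)
    (B : S → Matrix (Fin n) (Fin m) ℝ)

lemma memHist_ne_nil (Ψ) (x0 : EuclideanSpace ℝ (Fin n)) (l : List S) :
    memHist A B Ψ x0 l ≠ [] := by cases l <;> simp [memHist]

lemma headD_append' {α} (l t : List α) (d : α) (h : l ≠ []) :
    (l ++ t).headD d = l.headD d := by cases l with
  | nil => simp at h
  | cons a l => rfl

lemma memHist_shift (Ψ) (x : EuclideanSpace ℝ (Fin n)) (i : S) (l : List S) :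
    memHist A B Ψ x (l ++ [i]) =
      memHist A B (fun h ms => Ψ (h ++ [x]) (ms ++ [i]))
        (WithLp.toLp 2 ((A i).mulVec x + (B i).mulVec (Ψ [x] []))) l ++ [x] := by
  induction l with
  | nil => simp [memHist]
  | cons j l ih =>
      simp only [List.cons_append, memHist, List.append_eq]
      rw [ih, headD_append' _ _ _ (memHist_ne_nil A B _ _ _)]

lemma memTraj_shift (Ψ) (x : EuclideanSpace ℝ (Fin n)) (σ : ℕ → S) (k : ℕ) :
    memTraj A B Ψ x σ (k+1) =
      memTraj A B (fun h ms => Ψ (h ++ [x]) (ms ++ [σ 0]))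
        (WithLp.toLp 2 ((A (σ 0)).mulVec x + (B (σ 0)).mulVec (Ψ [x] []))) (fun k => σ (k+1)) k := by
  unfold memTraj
  have hl : (List.range (k+1)).reverse.map σ
      = ((List.range k).reverse.map (fun k => σ (k+1))) ++ [σ 0] := by
    rw [List.range_succ_eq_map]
    simp [List.map_reverse, List.map_map, Function.comp]
  rw [hl, memHist_shift, headD_append' _ _ _ (memHist_ne_nil A B _ _ _)]

def prepend (j : S) (τ : ℕ → S) : ℕ → S
  | 0 => j
  | (k+1) => τ k

@[simp] lemma prepend_zero (j : S) (τ : ℕ → S) : prepend j τ 0 = j := rfl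
@[simp] lemma prepend_succ (j : S) (τ : ℕ → S) (k : ℕ) : prepend j τ (k+1) = τ k := rfl

lemma memTraj_shift' (Ψ) (x : EuclideanSpace ℝ (Fin n)) (j : S) (τ : ℕ → S) (k : ℕ) :
    memTraj A B Ψ x (prepend j τ) (k+1) =
      memTraj A B (fun h ms => Ψ (h ++ [x]) (ms ++ [j]))
        (WithLp.toLp 2 ((A j).mulVec x + (B j).mulVec (Ψ [x] []))) τ k := by
  have h := memTraj_shift A B Ψ x (prepend j τ) k
  simpa using h

def valFunE (x0 : EuclideanSpace ℝ (Fin n)) : ℝ≥0∞ :=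
  ⨅ Ψ : List (EuclideanSpace ℝ (Fin n)) → List S → EuclideanSpace ℝ (Fin m),
    ⨆ σ : ℕ → S, ∑' k : ℕ, (‖memTraj A B Ψ x0 σ k‖₊ : ℝ≥0∞)

lemma valFunE_le {C γ : ℝ} (hC0 : 0 ≤ C) (hγ : γ ∈ Set.Ico (0:ℝ) 1)
    (Ψ : List (EuclideanSpace ℝ (Fin n)) → List S → EuclideanSpace ℝ (Fin m))
    (hΨ : ∀ (x0 : EuclideanSpace ℝ (Fin n)) (σ : ℕ → S) (k : ℕ),
      ‖memTraj A B Ψ x0 σ k‖ ≤ C * γ ^ k * ‖x0‖)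
    (x : EuclideanSpace ℝ (Fin n)) :
    valFunE A B x ≤ ENNReal.ofReal (C * (1 - γ)⁻¹ * ‖x‖) := by
  have hsum : Summable (fun k : ℕ => C * γ ^ k * ‖x‖) := by
    simpa [mul_assoc, mul_comm, mul_left_comm] using
      ((summable_geometric_of_lt_one hγ.1 hγ.2).mul_left C).mul_right ‖x‖
  refine iInf_le_of_le Ψ (iSup_le fun σ => ?_)
  calc ∑' k : ℕ, (‖memTraj A B Ψ x σ k‖₊ : ℝ≥0∞)
      ≤ ∑' k : ℕ, ENNReal.ofReal (C * γ ^ k * ‖x‖) := by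
        refine ENNReal.tsum_le_tsum fun k => ?_
        rw [← enorm_eq_nnnorm, ← ofReal_norm_eq_enorm]
        exact ENNReal.ofReal_le_ofReal (hΨ x σ k)
    _ = ENNReal.ofReal (∑' k : ℕ, C * γ ^ k * ‖x‖) :=
        (ENNReal.ofReal_tsum_of_nonneg
          (fun k => mul_nonneg (mul_nonneg hC0 (pow_nonneg hγ.1 k)) (norm_nonneg x)) hsum).symm
    _ = ENNReal.ofReal (C * (1 - γ)⁻¹ * ‖x‖) := by
        congr 1
        have : (fun k : ℕ => C * γ ^ k * ‖x‖) = fun k : ℕ => (C * ‖x‖) * γ ^ k := by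
          funext k; ring
        rw [this, tsum_mul_left, tsum_geometric_of_lt_one hγ.1 hγ.2]; ring


lemma valFun_eq (x0 : EuclideanSpace ℝ (Fin n)) :
    valFun A B x0 = (valFunE A B x0).toReal := rfl

end AuxSection

set_option maxHeartbeats 2000000 in
/-- Any minimizing feedback `Φ` for the value function yields the
strict Lyapunov decrease `V(A_i x + B_i Φ(x)) ≤ V(x) - ‖x‖ ≤ (1 - (1-γ)/C) V(x)`. -/
theorem valFun_decrease {n m : ℕ} (hn : 0 < n) (hm : 0 < m) {S : Type*} [Fintype S] [Nonempty S]
    (A : S → Matrix (Fin n) (Fin n) ℝ) (B : S → Matrix (Fin n) (Fin m) ℝ)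
    (C γ : ℝ) (hC : 1 < C) (hγ : γ ∈ Set.Ico (0 : ℝ) 1)
    (Ψ : List (EuclideanSpace ℝ (Fin n)) → List S → EuclideanSpace ℝ (Fin m))
    (hΨ : ∀ (x0 : EuclideanSpace ℝ (Fin n)) (σ : ℕ → S) (k : ℕ),
      ‖memTraj A B Ψ x0 σ k‖ ≤ C * γ ^ k * ‖x0‖)
    (Φ : EuclideanSpace ℝ (Fin n) → EuclideanSpace ℝ (Fin m))
    (hΦ : ∀ x : EuclideanSpace ℝ (Fin n),
      (⨆ i : S, valFun A B (WithLp.toLp 2 ((A i).mulVec x + (B i).mulVec (Φ x)))) =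
      ⨅ u : EuclideanSpace ℝ (Fin m),
        ⨆ i : S, valFun A B (WithLp.toLp 2 ((A i).mulVec x + (B i).mulVec u))) :
    ∀ (x : EuclideanSpace ℝ (Fin n)) (i : S),
      valFun A B (WithLp.toLp 2 ((A i).mulVec x + (B i).mulVec (Φ x))) ≤ valFun A B x - ‖x‖ ∧
      valFun A B x - ‖x‖ ≤ (1 - (1 - γ) / C) * valFun A B x := by
  intro x i
  have hγ0 := hγ.1
  have hγ1 := hγ.2
  have hC0 : (0:ℝ) < C := by linarith
  have h1γ : (0:ℝ) < 1 - γ := by linarith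
  have hfin : ∀ y, valFunE A B y ≤ ENNReal.ofReal (C * (1-γ)⁻¹ * ‖y‖) :=
    fun y => valFunE_le A B hC0.le hγ Ψ hΨ y
  have hfin' : ∀ y, valFunE A B y ≠ ⊤ :=
    fun y => ne_top_of_le_ne_top ENNReal.ofReal_ne_top (hfin y)
  have hVnn : ∀ y, 0 ≤ valFun A B y := fun y => ENNReal.toReal_nonneg
  constructor
  · -- first inequality
    refine le_of_forall_pos_le_add fun ε hε => ?_
    obtain ⟨Ψ', hΨ'⟩ : ∃ Ψ' : List (EuclideanSpace ℝ (Fin n)) → List S → EuclideanSpace ℝ (Fin m),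
        (⨆ σ : ℕ → S, ∑' k : ℕ, (‖memTraj A B Ψ' x σ k‖₊ : ℝ≥0∞))
          < valFunE A B x + ENNReal.ofReal ε := by
      rw [← iInf_lt_iff]
      exact ENNReal.lt_add_right (hfin' x) (ENNReal.ofReal_pos.mpr hε).ne'
    have step : ∀ j : S,
        ‖x‖ + valFun A B (WithLp.toLp 2 ((A j).mulVec x + (B j).mulVec (Ψ' [x] []))) ≤ valFun A B x + ε := by
      intro j
      have h1 : (‖x‖₊ : ℝ≥0∞) + valFunE A B (WithLp.toLp 2 ((A j).mulVec x + (B j).mulVec (Ψ' [x] [])))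
          ≤ valFunE A B x + ENNReal.ofReal ε := by
        refine le_trans ?_ hΨ'.le
        have h2 : valFunE A B (WithLp.toLp 2 ((A j).mulVec x + (B j).mulVec (Ψ' [x] [])))
            ≤ ⨆ τ : ℕ → S, ∑' k : ℕ,
              (‖memTraj A B (fun h ms => Ψ' (h ++ [x]) (ms ++ [j]))
                (WithLp.toLp 2 ((A j).mulVec x + (B j).mulVec (Ψ' [x] []))) τ k‖₊ : ℝ≥0∞) :=
          iInf_le _ _
        refine le_trans (add_le_add_right h2 _) ?_
        rw [ENNReal.add_iSup]
        refine iSup_le fun τ => ?_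
        have h3 : ∑' k : ℕ, (‖memTraj A B Ψ' x (prepend j τ) k‖₊ : ℝ≥0∞)
            = (‖x‖₊ : ℝ≥0∞) + ∑' k : ℕ,
              (‖memTraj A B (fun h ms => Ψ' (h ++ [x]) (ms ++ [j]))
                (WithLp.toLp 2 ((A j).mulVec x + (B j).mulVec (Ψ' [x] []))) τ k‖₊ : ℝ≥0∞) := by
          have h30 : memTraj A B Ψ' x (prepend j τ) 0 = x := by simp [memTraj, memHist]
          rw [tsum_eq_zero_add' ENNReal.summable, h30]
          exact congrArg (fun t => (‖x‖₊ : ℝ≥0∞) + t)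
            (tsum_congr fun k => by rw [memTraj_shift'])
        exact h3 ▸ le_iSup (fun σ : ℕ → S => ∑' k : ℕ, (‖memTraj A B Ψ' x σ k‖₊ : ℝ≥0∞))
          (prepend j τ)
      have h4 := ENNReal.toReal_mono (by
        exact ENNReal.add_ne_top.2 ⟨hfin' x, ENNReal.ofReal_ne_top⟩) h1
      rw [ENNReal.toReal_add (by simp) (hfin' _), ENNReal.toReal_add (hfin' x) ENNReal.ofReal_ne_top,
        ENNReal.coe_toReal, coe_nnnorm, ENNReal.toReal_ofReal hε.le] at h4
      exact h4
    have hbddA : BddAbove (Set.range fun j : S =>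
        valFun A B (WithLp.toLp 2 ((A j).mulVec x + (B j).mulVec (Φ x)))) := (Set.finite_range _).bddAbove
    have h5 : valFun A B (WithLp.toLp 2 ((A i).mulVec x + (B i).mulVec (Φ x)))
        ≤ ⨆ j : S, valFun A B (WithLp.toLp 2 ((A j).mulVec x + (B j).mulVec (Φ x))) := le_ciSup hbddA i
    rw [hΦ x] at h5
    have h6 : (⨅ u' : EuclideanSpace ℝ (Fin m),
          ⨆ j : S, valFun A B (WithLp.toLp 2 ((A j).mulVec x + (B j).mulVec u')))
        ≤ ⨆ j : S, valFun A B (WithLp.toLp 2 ((A j).mulVec x + (B j).mulVec (Ψ' [x] []))) := by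
      refine ciInf_le ⟨0, ?_⟩ _
      rintro r ⟨u', rfl⟩
      have h0 : (0:ℝ) ≤ ⨆ j : S, valFun A B (WithLp.toLp 2 ((A j).mulVec x + (B j).mulVec u')) :=
        le_trans (hVnn (WithLp.toLp 2 ((A (Classical.arbitrary S)).mulVec x + (B (Classical.arbitrary S)).mulVec u')))
          (le_ciSup (f := fun j : S => valFun A B (WithLp.toLp 2 ((A j).mulVec x + (B j).mulVec u')))
            (Set.finite_range _).bddAbove (Classical.arbitrary S))
      exact h0
    have h7 : (⨆ j : S, valFun A B (WithLp.toLp 2 ((A j).mulVec x + (B j).mulVec (Ψ' [x] []))))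
        ≤ valFun A B x - ‖x‖ + ε := ciSup_le fun j => by linarith [step j]
    linarith [h5.trans (h6.trans h7)]
  · -- second inequality
    have hV : valFun A B x ≤ C * (1-γ)⁻¹ * ‖x‖ :=
      ENNReal.toReal_le_of_le_ofReal
        (mul_nonneg (mul_nonneg hC0.le (inv_nonneg.2 h1γ.le)) (norm_nonneg x)) (hfin x)
    have hV' : (1-γ) * valFun A B x ≤ C * ‖x‖ := by
      have h := mul_le_mul_of_nonneg_left hV h1γ.le
      calc (1-γ) * valFun A B x ≤ (1-γ) * (C * (1-γ)⁻¹ * ‖x‖) := h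
        _ = C * ‖x‖ := by field_simp
    have hkey : (1-γ)/C * valFun A B x ≤ ‖x‖ := by
      rw [div_mul_eq_mul_div, div_le_iff₀ hC0]
      linarith
    have heq : (1 - (1-γ)/C) * valFun A B x
        = valFun A B x - (1-γ)/C * valFun A B x := by ring
    linarith
end
end
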